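/- For any edge uv in a finite simple graph G with domination number γ(G), the bondage number satisfies b(G) ≤ d(u) + d(v) − 1 − |N(u) ∩ N(v)|, where d denotes vertex degree and N denotes (open) neighbourhood. -/

import Mathlib

open SimpleGraph Finset

/-- A dominating set of a finite simple graph: every vertex not in `D` has a neighbour in `D`. -/
def DominatingSet {V : Type*} [Fintype V] (G : SimpleGraph V) (D : Finset V) : Prop :=
  ∀ v ∉ D, ∃ u ∈ D, G.Adj u v

/-- The domination number: minimum size of a dominating set. -/
noncomputable def domNum {V : Type*} [Fintype V] (G : SimpleGraph V) : ℕ :=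
  sInf {n | ∃ D : Finset V, DominatingSet G D ∧ D.card = n}

/-- The bondage number: minimum size of a set of edges whose removal increases the
domination number. -/
noncomputable def bondage {V : Type*} [Fintype V] (G : SimpleGraph V) : ℕ :=
  sInf {n | ∃ B : Finset (Sym2 V), ↑B ⊆ G.edgeSet ∧ B.card = n ∧
    domNum (G.deleteEdges ↑B) > domNum G}

lemma domSet_nonempty {V : Type*} [Fintype V] (G : SimpleGraph V) :
    {n | ∃ D : Finset V, DominatingSet G D ∧ D.card = n}.Nonempty :=
  ⟨(univ : Finset V).card, univ, fun w hw => absurd (mem_univ w) hw, rfl⟩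

lemma domNum_le {V : Type*} [Fintype V] (G : SimpleGraph V) (D : Finset V)
    (hD : DominatingSet G D) : domNum G ≤ D.card :=
  Nat.sInf_le ⟨D, hD, rfl⟩

lemma exists_min_dom {V : Type*} [Fintype V] (G : SimpleGraph V) :
    ∃ D : Finset V, DominatingSet G D ∧ D.card = domNum G :=
  Nat.sInf_mem (domSet_nonempty G)

lemma domNum_le_deleteEdges {V : Type*} [Fintype V] (G : SimpleGraph V) (s : Set (Sym2 V)) :
    domNum G ≤ domNum (G.deleteEdges s) := by
  obtain ⟨D, hD, hc⟩ := exists_min_dom (G.deleteEdges s)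
  rw [← hc]
  exact domNum_le G D fun w hw => by
    obtain ⟨x, hx, hadj⟩ := hD w hw
    exact ⟨x, hx, (SimpleGraph.deleteEdges_le s) hadj⟩

theorem stmt0 {V : Type*} [Fintype V] [DecidableEq V] (G : SimpleGraph V)
    [DecidableRel G.Adj] (u v : V) (huv : G.Adj u v) :
    (bondage G : ℤ) ≤
      G.degree u + G.degree v - 1 - (G.neighborFinset u ∩ G.neighborFinset v).card := by
  classical
  set Nu := G.neighborFinset u with hNu
  set Nv := G.neighborFinset v with hNv
  set S1 : Finset (Sym2 V) := Nu.image (fun w => s(u, w)) with hS1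
  set S2 : Finset (Sym2 V) := (Nv \ insert u Nu).image (fun w => s(v, w)) with hS2
  set B : Finset (Sym2 V) := S1 ∪ S2 with hB
  -- membership helpers
  have hmemS1 : ∀ w, G.Adj u w → s(u, w) ∈ B := by
    intro w hw
    exact mem_union_left _ (mem_image_of_mem _ (by simp [hNu, hw]))
  have hmemS2 : ∀ w, G.Adj v w → w ≠ u → ¬ G.Adj u w → s(v, w) ∈ B := by
    intro w hw hwu hnuw
    refine mem_union_right _ (mem_image_of_mem _ ?_)
    simp [hNv, hNu, hw, hwu, hnuw]
  -- B consists of edges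
  have hBsub : ↑B ⊆ G.edgeSet := by
    intro e he
    rw [Finset.mem_coe, hB, mem_union] at he
    rcases he with he | he <;>
    · obtain ⟨w, hw, rfl⟩ := mem_image.mp he
      simp only [hNu, hNv, mem_sdiff, mem_neighborFinset] at hw
      simp only [SimpleGraph.mem_edgeSet]
      first | exact hw | exact hw.1
  -- the graph after deletion
  set G' := G.deleteEdges (↑B : Set (Sym2 V)) with hG'
  have hle : ∀ {a b : V}, G'.Adj a b → G.Adj a b := fun h =>
    (SimpleGraph.deleteEdges_le _) h
  have hu_isolated : ∀ w, ¬ G'.Adj u w := by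
    intro w hadj
    rw [hG', SimpleGraph.deleteEdges_adj] at hadj
    exact hadj.2 (by exact_mod_cast hmemS1 w hadj.1)
  -- domination number strictly increases
  have hge : domNum G ≤ domNum G' := domNum_le_deleteEdges G _
  have hne : domNum G' ≠ domNum G := by
    intro heq
    obtain ⟨D, hD, hc⟩ := exists_min_dom G'
    have hu : u ∈ D := by
      by_contra hu
      obtain ⟨x, hx, hadj⟩ := hD u hu
      exact hu_isolated x hadj.symm
    have hdom : DominatingSet G (D.erase u) := by
      intro w hw
      by_cases hwu : w = u
      · by_cases hv : v ∈ D
        · exact ⟨v, mem_erase.mpr ⟨huv.ne', hv⟩, hwu.symm ▸ huv.symm⟩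
        · obtain ⟨x, hx, hadj⟩ := hD v hv
          have hxu : x ≠ u := fun h => hu_isolated v (h ▸ hadj)
          have hGxv : G.Adj x v := hle hadj
          have hux : G.Adj u x := by
            by_contra hux
            rw [hG', SimpleGraph.deleteEdges_adj] at hadj
            have : s(v, x) ∈ B := hmemS2 x hGxv.symm hxu (fun h => hux h)
            rw [Sym2.eq_swap] at this
            exact hadj.2 (by exact_mod_cast this)
          exact ⟨x, mem_erase.mpr ⟨hxu, hx⟩, hwu.symm ▸ hux.symm⟩
      · have hwD : w ∉ D := fun h => hw (mem_erase.mpr ⟨hwu, h⟩)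
        obtain ⟨x, hx, hadj⟩ := hD w hwD
        have hxu : x ≠ u := fun h => hu_isolated w (h ▸ hadj)
        exact ⟨x, mem_erase.mpr ⟨hxu, hx⟩, hle hadj⟩
    have h1 : domNum G ≤ (D.erase u).card := domNum_le G _ hdom
    have h2 : (D.erase u).card = D.card - 1 := card_erase_of_mem hu
    have h3 : 1 ≤ D.card := card_pos.mpr ⟨u, hu⟩
    omega
  have hgt : domNum G' > domNum G := lt_of_le_of_ne hge (Ne.symm hne)
  -- bondage bound
  have hbond : bondage G ≤ B.card := Nat.sInf_le ⟨B, hBsub, rfl, hgt⟩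
  -- cardinality computation
  have hcard1 : S1.card = G.degree u := by
    rw [hS1, card_image_of_injective _ (fun a b h => (Sym2.congr_right).mp h)]
    exact (G.card_neighborFinset_eq_degree u).symm ▸ rfl
  have hdisj : Disjoint S1 S2 := by
    rw [Finset.disjoint_left]
    intro e he1 he2
    obtain ⟨a, ha, rfl⟩ := mem_image.mp he1
    obtain ⟨b, hb, hba⟩ := mem_image.mp he2
    simp only [mem_sdiff, mem_insert, not_or] at hb
    rw [Sym2.eq_iff] at hba
    rcases hba with ⟨h1, h2⟩ | ⟨h1, h2⟩
    · exact huv.ne' h1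
    · exact hb.2.1 h2
  have hinter : Nv ∩ insert u Nu = insert u (Nu ∩ Nv) := by
    ext x
    simp only [mem_inter, mem_insert]
    constructor
    · rintro ⟨h1, h2 | h2⟩
      · exact Or.inl h2
      · exact Or.inr ⟨h2, h1⟩
    · rintro (h | ⟨h1, h2⟩)
      · exact ⟨by rw [h, hNv, mem_neighborFinset]; exact huv.symm, Or.inl h⟩
      · exact ⟨h2, Or.inr h1⟩
  have hcard2 : S2.card = Nv.card - ((Nu ∩ Nv).card + 1) := by
    rw [hS2, card_image_of_injective _ (fun a b h => (Sym2.congr_right).mp h)]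
    rw [sdiff_eq_sdiff_iff_inter_eq_inter.mpr rfl]
    have : Nv \ insert u Nu = Nv \ (Nv ∩ insert u Nu) := by
      rw [sdiff_inter_self_left]
    rw [this, card_sdiff_of_subset (inter_subset_left), hinter,
      card_insert_of_notMem (fun h => (G.notMem_neighborFinset_self u) (hNu ▸ (mem_inter.mp h).1))]
  have hsubNv : insert u (Nu ∩ Nv) ⊆ Nv := by
    intro x hx
    rcases mem_insert.mp hx with h | h
    · rw [h, hNv, mem_neighborFinset]; exact huv.symm
    · exact (mem_inter.mp h).2
  have hNvcard : (Nu ∩ Nv).card + 1 ≤ Nv.card := by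
    have := card_le_card hsubNv
    rwa [card_insert_of_notMem
      (fun h => (G.notMem_neighborFinset_self u) (hNu ▸ (mem_inter.mp h).1))] at this
  have hBcard : B.card = S1.card + S2.card := card_union_of_disjoint hdisj
  have hdv : G.degree v = Nv.card := (G.card_neighborFinset_eq_degree v).symm ▸ rfl
  have hdu : G.degree u = Nu.card := (G.card_neighborFinset_eq_degree u).symm ▸ rfl
  have hkey : bondage G ≤ G.degree u + (G.degree v - ((Nu ∩ Nv).card + 1)) := by
    rw [← hcard1]
    omega
  rw [hdu, hdv] at *
  omega
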